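/- arXiv:1001.1195 — 3 statements merged into one kernel-verified Lean document; each statement's English description precedes it below -/
import Mathlib

section
/- For the random recursive tree on n nodes, the expected proportions c_n(i) of nodes with exactly i children satisfy the recurrence c_n(i) = ((n-2)/n)·c_{n-1}(i) + (1/n)·c_{n-1}(i-1) for all n ≥ 3 and 1 ≤ i ≤ n-1. -/
open Finset

/-- Sample space of a random recursive tree with `m + 1` nodes labelled `0, …, m`:
node `k + 1` attaches by a directed edge from a parent chosen in `{0, …, k}`.
The uniform measure on this product type makes each parent choice independent
and uniform, which is exactly the sequential growth model. -/
def Omega (m : ℕ) : Type := ∀ k : Fin m, Fin (k.val + 1)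

instance (m : ℕ) : Fintype (Omega m) := by unfold Omega; infer_instance

instance (m : ℕ) : Nonempty (Omega m) := by unfold Omega; infer_instance

/-- The number of children of node `v` in the outcome `ω`. -/
def childCount {m : ℕ} (ω : Omega m) (v : ℕ) : ℕ :=
  (Finset.univ.filter (fun k : Fin m => ((ω k).val = v))).card

/-- `C_n(i)`: the number of nodes having exactly `i` children. -/
def numChildEq (m : ℕ) (ω : Omega m) (i : ℕ) : ℕ :=
  ((Finset.range (m + 1)).filter (fun v => childCount ω v = i)).card

/-- The generation (depth) of node `v`: the root `0` has depth `0`, and a node's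
depth is one more than its parent's depth. -/
def depth {m : ℕ} (ω : Omega m) : ℕ → ℕ
  | 0 => 0
  | (j + 1) => if h : j < m then depth ω (ω ⟨j, h⟩).val + 1 else 0
  decreasing_by exact (ω ⟨j, h⟩).isLt

/-- `G_n(j)`: the number of nodes at generation `j`. -/
def numGenEq (m : ℕ) (ω : Omega m) (j : ℕ) : ℕ :=
  ((Finset.range (m + 1)).filter (fun v => depth ω v = j)).card

/-- `L_n(i,j)`: the number of nodes with `i` children lying at generation `j`. -/
def numJointEq (m : ℕ) (ω : Omega m) (i j : ℕ) : ℕ :=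
  ((Finset.range (m + 1)).filter (fun v => childCount ω v = i ∧ depth ω v = j)).card

/-- Expectation with respect to the uniform distribution on `Omega m`. -/
noncomputable def treeExpect (m : ℕ) (f : Omega m → ℝ) : ℝ :=
  (∑ ω : Omega m, f ω) / (Fintype.card (Omega m))

/-- `c_n(i) = E[C_n(i)]/n`, the expected proportion of nodes with `i` children
in the random recursive tree on `n` nodes. -/
noncomputable def c (n i : ℕ) : ℝ :=
  treeExpect (n - 1) (fun ω => (numChildEq (n - 1) ω i : ℝ)) / n

/-- `g_n(j) = E[G_n(j)]/n`, the expected proportion of nodes at generation `j`. -/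
noncomputable def g (n j : ℕ) : ℝ :=
  treeExpect (n - 1) (fun ω => (numGenEq (n - 1) ω j : ℝ)) / n

/-- `p_n(i,j) = E[L_n(i,j)]/n`, the expected proportion of nodes with `i`
children at generation `j`. -/
noncomputable def p (n i j : ℕ) : ℝ :=
  treeExpect (n - 1) (fun ω => (numJointEq (n - 1) ω i j : ℝ)) / n


/-- Auxiliary: extend an outcome on `M` choices by a parent choice for the last node. -/
def ext' {M : ℕ} (ω' : Omega M) (u : Fin (M+1)) : Omega (M+1) :=
  Fin.snoc (α := fun k : Fin (M+1) => Fin (k.val + 1)) ω' u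

lemma sum_snoc (M : ℕ) (f : Omega (M+1) → ℝ) :
    ∑ ω : Omega (M+1), f ω = ∑ ω' : Omega M, ∑ u : Fin (M+1), f (ext' ω' u) := by
  unfold Omega
  rw [← (Fin.snocEquiv (fun k : Fin (M+1) => Fin (k.val + 1))).sum_comp f]
  rw [Fintype.sum_prod_type]
  rw [Finset.sum_comm]
  rfl

lemma childCount_ext {M : ℕ} (ω' : Omega M) (u : Fin (M+1)) (v : ℕ) :
    childCount (ext' ω' u) v = childCount ω' v + (if u.val = v then 1 else 0) := by
  unfold childCount ext'
  rw [Finset.card_filter, Finset.card_filter, Fin.sum_univ_castSucc]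
  simp [Fin.snoc_castSucc, Fin.snoc_last]
  have h1 : ∀ x : Fin M, ((Fin.snoc (α := fun k : Fin (M+1) => Fin (k.val + 1)) ω' u x.castSucc : Fin (x.val+1)) : ℕ) = (ω' x : ℕ) := fun x =>
    congrArg Fin.val (Fin.snoc_castSucc (α := fun k : Fin (M+1) => Fin (k.val + 1)) (p := ω') (x := u) x)
  have h2 : ((Fin.snoc (α := fun k : Fin (M+1) => Fin (k.val + 1)) ω' u (Fin.last M) : Fin (M+1)) : ℕ) = (u : ℕ) := 
    congrArg Fin.val (Fin.snoc_last (α := fun k : Fin (M+1) => Fin (k.val + 1)) (p := ω') (x := u))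
  simp only [h1, h2]

lemma childCount_last {m : ℕ} (ω : Omega m) : childCount ω m = 0 := by
  unfold childCount
  rw [Finset.card_eq_zero, Finset.filter_eq_empty_iff]
  intro k _
  exact Nat.ne_of_lt (lt_of_lt_of_le (ω k).isLt k.isLt)

lemma numChildEq_eq_sum (m i : ℕ) (ω : Omega m) :
    (numChildEq m ω i : ℝ) = ∑ v ∈ Finset.range (m+1), (if childCount ω v = i then (1:ℝ) else 0) := by
  rw [numChildEq, Finset.card_filter]
  push_cast
  rfl

lemma key {M i : ℕ} (hi : 1 ≤ i) (ω' : Omega M) (u : Fin (M+1)) :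
    (numChildEq (M+1) (ext' ω' u) i : ℝ)
      = (numChildEq M ω' i : ℝ) - (if childCount ω' u.val = i then 1 else 0)
        + (if childCount ω' u.val = i - 1 then 1 else 0) := by
  rw [numChildEq_eq_sum, numChildEq_eq_sum]
  rw [show M + 1 + 1 = (M+1) + 1 from rfl, Finset.sum_range_succ]
  rw [childCount_last (ext' ω' u)]
  have hi0 : ¬ (0 = i) := by omega
  rw [if_neg hi0, add_zero]
  have hmain : ∑ v ∈ Finset.range (M+1), (if childCount (ext' ω' u) v = i then (1:ℝ) else 0)
      = ∑ v ∈ Finset.range (M+1), ((if childCount ω' v = i then (1:ℝ) else 0)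
          + (if u.val = v then ((if childCount ω' v = i-1 then (1:ℝ) else 0)
              - (if childCount ω' v = i then (1:ℝ) else 0)) else 0)) := by
    apply Finset.sum_congr rfl
    intro v _
    rw [childCount_ext]
    by_cases h : u.val = v
    · have : (childCount ω' v + 1 = i) ↔ (childCount ω' v = i - 1) := by omega
      simp [h, this]
    · simp [h]
  rw [hmain, Finset.sum_add_distrib]
  have hmem : u.val ∈ Finset.range (M+1) := Finset.mem_range.2 u.isLt
  rw [Finset.sum_ite_eq (Finset.range (M+1)) u.val
      (fun v => (if childCount ω' v = i-1 then (1:ℝ) else 0)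
              - (if childCount ω' v = i then (1:ℝ) else 0)), if_pos hmem]
  ring

lemma sum_u {M i : ℕ} (hi : 1 ≤ i) (ω' : Omega M) :
    ∑ u : Fin (M+1), (numChildEq (M+1) (ext' ω' u) i : ℝ)
      = (M : ℝ) * numChildEq M ω' i + numChildEq M ω' (i-1) := by
  have hA : ∀ j : ℕ, ∑ u : Fin (M+1), (if childCount ω' u.val = j then (1:ℝ) else 0)
      = (numChildEq M ω' j : ℝ) := by
    intro j
    rw [Fin.sum_univ_eq_sum_range (fun v => if childCount ω' v = j then (1:ℝ) else 0),
      numChildEq_eq_sum]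
  simp only [key hi]
  rw [Finset.sum_add_distrib, Finset.sum_sub_distrib, hA, hA, Finset.sum_const]
  simp [Finset.card_univ]
  ring

lemma total {M i : ℕ} (hi : 1 ≤ i) :
    ∑ ω : Omega (M+1), (numChildEq (M+1) ω i : ℝ)
      = (M : ℝ) * (∑ ω' : Omega M, (numChildEq M ω' i : ℝ))
        + ∑ ω' : Omega M, (numChildEq M ω' (i-1) : ℝ) := by
  rw [sum_snoc M (fun ω => (numChildEq (M+1) ω i : ℝ))]
  rw [Finset.mul_sum, ← Finset.sum_add_distrib]
  exact Finset.sum_congr rfl fun ω' _ => sum_u hi ω'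

lemma card_succ (M : ℕ) :
    (Fintype.card (Omega (M+1)) : ℝ) = (M+1 : ℝ) * Fintype.card (Omega M) := by
  have := sum_snoc M (fun _ => (1:ℝ))
  simp [Finset.card_univ] at this
  rw [this]; ring

/-- the expected proportions `c_n(i)` of nodes with exactly `i`
children in the random recursive tree satisfy
`c_n(i) = ((n-2)/n)·c_{n-1}(i) + (1/n)·c_{n-1}(i-1)` for `n ≥ 3`, `1 ≤ i ≤ n-1`. -/
theorem children_recurrence (n i : ℕ) (hn : 3 ≤ n) (hi1 : 1 ≤ i) (hi2 : i ≤ n - 1) :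
    c n i = (((n : ℝ) - 2) / n) * c (n - 1) i + (1 / n) * c (n - 1) (i - 1) := by
  obtain ⟨M, rfl⟩ : ∃ M, n = M + 2 := ⟨n - 2, by omega⟩
  unfold c treeExpect
  show (∑ x : Omega (M+1), (numChildEq (M+1) x i : ℝ)) / (Fintype.card (Omega (M+1)) : ℝ) / ((M+2:ℕ) : ℝ)
      = (((M+2:ℕ) : ℝ) - 2) / ((M+2:ℕ) : ℝ) *
          ((∑ x : Omega M, (numChildEq M x i : ℝ)) / (Fintype.card (Omega M) : ℝ) / ((M+1:ℕ) : ℝ)) +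
        1 / ((M+2:ℕ) : ℝ) *
          ((∑ x : Omega M, (numChildEq M x (i-1) : ℝ)) / (Fintype.card (Omega M) : ℝ) / ((M+1:ℕ) : ℝ))
  rw [total hi1, card_succ M]
  have hc : (0:ℝ) < Fintype.card (Omega M) := by
    exact_mod_cast Fintype.card_pos
  have h1 : ((M:ℝ) + 1) ≠ 0 := by positivity
  have h2 : ((M:ℝ) + 2) ≠ 0 := by positivity
  push_cast
  field_simp
  ring_nf
end

section
/- In a random recursive tree on n ≥ 1 nodes, the variance of the number of children of a uniformly chosen node equals Var_n[C] = 2 − (n−1)/n² − 2H_n/n, where H_n = Σ_{i=1}^{n} 1/i. -/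
open Finset

/-- The `n`-th harmonic number `H_n = Σ_{i=1}^n 1/i`. -/
noncomputable def harmonicR (n : ℕ) : ℝ := ∑ i ∈ Finset.range n, (1 : ℝ) / (i + 1)

lemma rrt_sum_pi_prod (m : ℕ) (f : ∀ j : Fin m, Fin (j.val + 1) → ℝ) :
    ∑ ω : Omega m, ∏ j, f j (ω j) = ∏ j, ∑ x, f j x := by
  rw [Fintype.prod_sum]
  rfl

lemma rrt_card_omega (m : ℕ) :
    (Fintype.card (Omega m) : ℝ) = ∏ j : Fin m, ((j : ℕ) + 1 : ℝ) := by
  have : Fintype.card (Omega m) = ∏ j : Fin m, ((j : ℕ) + 1) := by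
    show Fintype.card (∀ k : Fin m, Fin (k.val + 1)) = _
    rw [Fintype.card_pi]
    simp
  rw [this]
  push_cast
  rfl

lemma rrt_sum_ind_fin (K v : ℕ) :
    (∑ x : Fin (K + 1), if (x : ℕ) = v then (1 : ℝ) else 0) = if v ≤ K then 1 else 0 := by
  by_cases h : v ≤ K
  · rw [if_pos h, Finset.sum_eq_single ⟨v, by omega⟩]
    · simp
    · intro b _ hb
      rw [if_neg (by simpa [Fin.ext_iff] using hb)]
    · simp
  · rw [if_neg h]
    exact Finset.sum_eq_zero fun x _ => if_neg (by have := x.isLt; omega)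

lemma rrt_childCount_cast (m : ℕ) (ω : Omega m) (v : ℕ) :
    (childCount ω v : ℝ) = ∑ k : Fin m, if ((ω k) : ℕ) = v then (1 : ℝ) else 0 := by
  rw [childCount, Finset.card_filter]
  push_cast
  simp

lemma rrt_key (m : ℕ) (k l : Fin m) (v : ℕ) :
    (∑ ω : Omega m,
      (if ((ω k) : ℕ) = v then (1 : ℝ) else 0) * (if ((ω l) : ℕ) = v then (1 : ℝ) else 0))
    = (∏ j : Fin m, (((j : ℕ) : ℝ) + 1)) *
      (if k = l then (if v ≤ (k : ℕ) then 1 / (((k : ℕ) : ℝ) + 1) else 0)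
       else (if v ≤ (k : ℕ) ∧ v ≤ (l : ℕ) then
         1 / ((((k : ℕ) : ℝ) + 1) * (((l : ℕ) : ℝ) + 1)) else 0)) := by
  have hptw : ∀ ω : Omega m,
      (if ((ω k) : ℕ) = v then (1 : ℝ) else 0) * (if ((ω l) : ℕ) = v then (1 : ℝ) else 0)
      = ∏ j : Fin m,
          ((if j = k then (if ((ω j) : ℕ) = v then (1 : ℝ) else 0) else 1) *
           (if j = l then (if ((ω j) : ℕ) = v then (1 : ℝ) else 0) else 1)) := by
    intro ω
    rw [Finset.prod_mul_distrib, Finset.prod_ite_eq' univ k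
      (fun j => (if ((ω j) : ℕ) = v then (1 : ℝ) else 0)),
      Finset.prod_ite_eq' univ l (fun j => (if ((ω j) : ℕ) = v then (1 : ℝ) else 0))]
    simp
  rw [Finset.sum_congr rfl (fun ω _ => hptw ω),
    rrt_sum_pi_prod m (fun j x => (if j = k then (if (x : ℕ) = v then (1 : ℝ) else 0) else 1) *
      (if j = l then (if (x : ℕ) = v then (1 : ℝ) else 0) else 1))]
  have hk1 : ((k : ℕ) : ℝ) + 1 ≠ 0 := by positivity
  have hl1 : ((l : ℕ) : ℝ) + 1 ≠ 0 := by positivity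
  by_cases hkl : k = l
  · subst hkl
    rw [if_pos rfl]
    have hs : ∀ j : Fin m, (∑ x : Fin (j.val + 1),
        ((if j = k then (if (x : ℕ) = v then (1 : ℝ) else 0) else 1) *
         (if j = k then (if (x : ℕ) = v then (1 : ℝ) else 0) else 1)))
        = if j = k then (if v ≤ (k : ℕ) then 1 else 0) else (((j : ℕ) : ℝ) + 1) := by
      intro j
      by_cases hj : j = k
      · rw [if_pos hj]
        subst hj
        rw [← rrt_sum_ind_fin j.val v]
        apply Finset.sum_congr rfl
        intro x _
        rw [if_pos rfl]
        by_cases hx : (x : ℕ) = v <;> simp [hx]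
      · simp [hj, Finset.card_univ]
    rw [Finset.prod_congr rfl (fun j _ => hs j)]
    rw [← Finset.mul_prod_erase univ _ (mem_univ k), if_pos rfl]
    have hrest : ∏ j ∈ univ.erase k,
        (if j = k then (if v ≤ (k : ℕ) then (1:ℝ) else 0) else (((j : ℕ) : ℝ) + 1))
        = ∏ j ∈ univ.erase k, (((j : ℕ) : ℝ) + 1) := by
      apply Finset.prod_congr rfl
      intro j hj
      rw [if_neg (Finset.ne_of_mem_erase hj)]
    rw [hrest, ← Finset.mul_prod_erase univ (fun j : Fin m => (((j : ℕ) : ℝ) + 1)) (mem_univ k)]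
    by_cases hv : v ≤ (k : ℕ)
    · rw [if_pos hv, if_pos hv]
      field_simp
    · rw [if_neg hv, if_neg hv]
      ring
  · rw [if_neg hkl]
    have hlk' : ¬ l = k := fun h => hkl h.symm
    have hs : ∀ j : Fin m, (∑ x : Fin (j.val + 1),
        ((if j = k then (if (x : ℕ) = v then (1 : ℝ) else 0) else 1) *
         (if j = l then (if (x : ℕ) = v then (1 : ℝ) else 0) else 1)))
        = if j = k then (if v ≤ (k : ℕ) then 1 else 0)
          else if j = l then (if v ≤ (l : ℕ) then 1 else 0) else (((j : ℕ) : ℝ) + 1) := by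
      intro j
      by_cases hj : j = k
      · rw [if_pos hj]
        subst hj
        rw [← rrt_sum_ind_fin j.val v]
        apply Finset.sum_congr rfl
        intro x _
        rw [if_pos rfl, if_neg hkl, mul_one]
      · by_cases hj' : j = l
        · rw [if_neg hj, if_pos hj']
          subst hj'
          rw [← rrt_sum_ind_fin j.val v]
          apply Finset.sum_congr rfl
          intro x _
          rw [if_neg hj, if_pos rfl, one_mul]
        · simp [hj, hj', Finset.card_univ]
    rw [Finset.prod_congr rfl (fun j _ => hs j)]
    have hlk : l ∈ univ.erase k := Finset.mem_erase.mpr ⟨hlk', mem_univ l⟩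
    rw [← Finset.mul_prod_erase univ _ (mem_univ k), if_pos rfl,
      ← Finset.mul_prod_erase (univ.erase k) _ hlk]
    rw [if_neg hlk', if_pos rfl]
    have hrest : ∏ j ∈ (univ.erase k).erase l,
        ((if j = k then (if v ≤ (k : ℕ) then (1:ℝ) else 0)
          else if j = l then (if v ≤ (l : ℕ) then 1 else 0) else (((j : ℕ) : ℝ) + 1)))
        = ∏ j ∈ (univ.erase k).erase l, (((j : ℕ) : ℝ) + 1) := by
      apply Finset.prod_congr rfl
      intro j hj
      have hj1 := Finset.ne_of_mem_erase hj
      have hj2 := Finset.ne_of_mem_erase (Finset.mem_of_mem_erase hj)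
      rw [if_neg hj2, if_neg hj1]
    rw [hrest,
      ← Finset.mul_prod_erase univ (fun j : Fin m => (((j : ℕ) : ℝ) + 1)) (mem_univ k),
      ← Finset.mul_prod_erase (univ.erase k) (fun j : Fin m => (((j : ℕ) : ℝ) + 1)) hlk]
    by_cases hv : v ≤ (k : ℕ) ∧ v ≤ (l : ℕ)
    · rw [if_pos hv.1, if_pos hv.2, if_pos hv]
      field_simp
    · rw [if_neg hv]
      rcases not_and_or.mp hv with h | h
      · rw [if_neg h]; ring
      · rw [if_neg h]; ring

lemma rrt_F_eq (m : ℕ) :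
    ∑ k ∈ Finset.range m, ∑ l ∈ Finset.range m,
      (if k = l then (1 : ℝ)
       else ((min k l : ℕ) + 1 : ℝ) / (((k : ℝ) + 1) * ((l : ℝ) + 1)))
    = 3 * m - 2 * harmonicR m := by
  induction m with
  | zero => simp [harmonicR]
  | succ m ih =>
    have hm1 : ((m : ℝ) + 1) ≠ 0 := by positivity
    rw [Finset.sum_range_succ]
    simp only [Finset.sum_range_succ]
    rw [Finset.sum_add_distrib, ih]
    have h1 : ∀ k ∈ Finset.range m,
        (if k = m then (1 : ℝ)
         else ((min k m : ℕ) + 1 : ℝ) / (((k : ℝ) + 1) * ((m : ℝ) + 1)))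
        = 1 / ((m : ℝ) + 1) := by
      intro k hk
      have hkm : k < m := Finset.mem_range.mp hk
      rw [if_neg (Nat.ne_of_lt hkm), min_eq_left hkm.le]
      have : ((k : ℝ) + 1) ≠ 0 := by positivity
      push_cast
      field_simp
    have h2 : ∀ l ∈ Finset.range m,
        (if m = l then (1 : ℝ)
         else ((min m l : ℕ) + 1 : ℝ) / (((m : ℝ) + 1) * ((l : ℝ) + 1)))
        = 1 / ((m : ℝ) + 1) := by
      intro l hl
      have hlm : l < m := Finset.mem_range.mp hl
      rw [if_neg (Nat.ne_of_lt hlm).symm, min_eq_right hlm.le]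
      have : ((l : ℝ) + 1) ≠ 0 := by positivity
      push_cast
      field_simp
    rw [Finset.sum_congr rfl h1, Finset.sum_congr rfl h2]
    have hH : harmonicR (m + 1) = harmonicR m + 1 / ((m : ℝ) + 1) := by
      rw [harmonicR, harmonicR, Finset.sum_range_succ]
    simp only [Finset.sum_const, Finset.card_range, nsmul_eq_mul, if_pos rfl, hH]
    push_cast
    field_simp
    ring

lemma rrt_count1 (m K : ℕ) (hK : K ≤ m) (x : ℝ) :
    ∑ v ∈ Finset.range (m + 1), (if v ≤ K then x else 0) = ((K : ℝ) + 1) * x := by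
  rw [← Finset.sum_filter]
  have h : (Finset.range (m + 1)).filter (fun v => v ≤ K) = Finset.range (K + 1) := by
    ext v; simp; omega
  rw [h, Finset.sum_const, Finset.card_range, nsmul_eq_mul]
  push_cast; ring

lemma rrt_count2 (m k l : ℕ) (hk : k ≤ m) (hl : l ≤ m) (x : ℝ) :
    ∑ v ∈ Finset.range (m + 1), (if v ≤ k ∧ v ≤ l then x else 0)
    = (((min k l : ℕ) : ℝ) + 1) * x := by
  rw [← Finset.sum_filter]
  have h : (Finset.range (m + 1)).filter (fun v => v ≤ k ∧ v ≤ l)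
      = Finset.range (min k l + 1) := by
    ext v; simp; omega
  rw [h, Finset.sum_const, Finset.card_range, nsmul_eq_mul]
  push_cast; ring

lemma rrt_sum_sq (m : ℕ) :
    ∑ ω : Omega m, ∑ v ∈ Finset.range (m + 1), (childCount ω v : ℝ) ^ 2
    = (Fintype.card (Omega m) : ℝ) * (3 * m - 2 * harmonicR m) := by
  set N : ℝ := ∏ j : Fin m, (((j : ℕ) : ℝ) + 1) with hN
  have hv : ∀ v : ℕ, ∑ ω : Omega m, (childCount ω v : ℝ) ^ 2
      = ∑ k : Fin m, ∑ l : Fin m, N *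
        (if k = l then (if v ≤ (k : ℕ) then 1 / (((k : ℕ) : ℝ) + 1) else 0)
         else (if v ≤ (k : ℕ) ∧ v ≤ (l : ℕ) then
           1 / ((((k : ℕ) : ℝ) + 1) * (((l : ℕ) : ℝ) + 1)) else 0)) := by
    intro v
    calc ∑ ω : Omega m, (childCount ω v : ℝ) ^ 2
        = ∑ ω : Omega m, ∑ k : Fin m, ∑ l : Fin m,
            (if ((ω k) : ℕ) = v then (1 : ℝ) else 0) *
            (if ((ω l) : ℕ) = v then (1 : ℝ) else 0) := by
          apply Finset.sum_congr rfl
          intro ω _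
          rw [rrt_childCount_cast, pow_two, Finset.sum_mul_sum]
      _ = ∑ k : Fin m, ∑ ω : Omega m, ∑ l : Fin m,
            (if ((ω k) : ℕ) = v then (1 : ℝ) else 0) *
            (if ((ω l) : ℕ) = v then (1 : ℝ) else 0) := Finset.sum_comm
      _ = ∑ k : Fin m, ∑ l : Fin m, ∑ ω : Omega m,
            (if ((ω k) : ℕ) = v then (1 : ℝ) else 0) *
            (if ((ω l) : ℕ) = v then (1 : ℝ) else 0) := by
          exact Finset.sum_congr rfl fun k _ => Finset.sum_comm
      _ = _ := by
          exact Finset.sum_congr rfl fun k _ => Finset.sum_congr rfl fun l _ => rrt_key m k l v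
  calc ∑ ω : Omega m, ∑ v ∈ Finset.range (m + 1), (childCount ω v : ℝ) ^ 2
      = ∑ v ∈ Finset.range (m + 1), ∑ ω : Omega m, (childCount ω v : ℝ) ^ 2 :=
        Finset.sum_comm
    _ = ∑ v ∈ Finset.range (m + 1), ∑ k : Fin m, ∑ l : Fin m, N *
        (if k = l then (if v ≤ (k : ℕ) then 1 / (((k : ℕ) : ℝ) + 1) else 0)
         else (if v ≤ (k : ℕ) ∧ v ≤ (l : ℕ) then
           1 / ((((k : ℕ) : ℝ) + 1) * (((l : ℕ) : ℝ) + 1)) else 0)) :=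
        Finset.sum_congr rfl fun v _ => hv v
    _ = ∑ k : Fin m, ∑ l : Fin m, ∑ v ∈ Finset.range (m + 1), N *
        (if k = l then (if v ≤ (k : ℕ) then 1 / (((k : ℕ) : ℝ) + 1) else 0)
         else (if v ≤ (k : ℕ) ∧ v ≤ (l : ℕ) then
           1 / ((((k : ℕ) : ℝ) + 1) * (((l : ℕ) : ℝ) + 1)) else 0)) := by
        rw [Finset.sum_comm]
        exact Finset.sum_congr rfl fun k _ => Finset.sum_comm
    _ = ∑ k : Fin m, ∑ l : Fin m, N *
        (if (k : ℕ) = (l : ℕ) then (1 : ℝ)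
         else (((min (k : ℕ) (l : ℕ) : ℕ) : ℝ) + 1) /
           ((((k : ℕ) : ℝ) + 1) * (((l : ℕ) : ℝ) + 1))) := by
        apply Finset.sum_congr rfl
        intro k _
        apply Finset.sum_congr rfl
        intro l _
        rw [← Finset.mul_sum]
        congr 1
        by_cases hkl : k = l
        · subst hkl
          have hdiag : ∀ v ∈ Finset.range (m + 1),
              (if k = k then (if v ≤ (k : ℕ) then 1 / (((k : ℕ) : ℝ) + 1) else 0)
               else (if v ≤ (k : ℕ) ∧ v ≤ (k : ℕ) then
                 1 / ((((k : ℕ) : ℝ) + 1) * (((k : ℕ) : ℝ) + 1)) else 0))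
              = (if v ≤ (k : ℕ) then 1 / (((k : ℕ) : ℝ) + 1) else 0) :=
            fun v _ => if_pos rfl
          rw [Finset.sum_congr rfl hdiag, rrt_count1 m (k : ℕ) (by omega) _]
          have : (((k : ℕ) : ℝ) + 1) ≠ 0 := by positivity
          simp only [if_pos rfl]
          field_simp
          simp
        · have hoff : ∀ v ∈ Finset.range (m + 1),
              (if k = l then (if v ≤ (k : ℕ) then 1 / (((k : ℕ) : ℝ) + 1) else 0)
               else (if v ≤ (k : ℕ) ∧ v ≤ (l : ℕ) then
                 1 / ((((k : ℕ) : ℝ) + 1) * (((l : ℕ) : ℝ) + 1)) else 0))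
              = (if v ≤ (k : ℕ) ∧ v ≤ (l : ℕ) then
                 1 / ((((k : ℕ) : ℝ) + 1) * (((l : ℕ) : ℝ) + 1)) else 0) :=
            fun v _ => if_neg hkl
          have hval : ¬((k : ℕ) = (l : ℕ)) := by simpa [Fin.ext_iff] using hkl
          rw [Finset.sum_congr rfl hoff,
            rrt_count2 m (k : ℕ) (l : ℕ) (by omega) (by omega) _, if_neg hval, mul_one_div]
    _ = N * ∑ k ∈ Finset.range m, ∑ l ∈ Finset.range m,
        (if k = l then (1 : ℝ)
         else ((min k l : ℕ) + 1 : ℝ) / (((k : ℝ) + 1) * ((l : ℝ) + 1))) := by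
        rw [Finset.mul_sum]
        rw [← Fin.sum_univ_eq_sum_range (fun a => N * ∑ l ∈ Finset.range m,
          (if a = l then (1 : ℝ)
           else ((min a l : ℕ) + 1 : ℝ) / (((a : ℝ) + 1) * ((l : ℝ) + 1)))) m]
        apply Finset.sum_congr rfl
        intro k _
        rw [← Finset.mul_sum]
        congr 1
        exact Fin.sum_univ_eq_sum_range (fun b =>
          (if (k : ℕ) = b then (1 : ℝ)
           else ((min (k : ℕ) b : ℕ) + 1 : ℝ) / ((((k : ℕ) : ℝ) + 1) * ((b : ℝ) + 1)))) m
    _ = (Fintype.card (Omega m) : ℝ) * (3 * m - 2 * harmonicR m) := by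
        rw [rrt_F_eq, rrt_card_omega]

lemma rrt_childCount_le (m : ℕ) (ω : Omega m) (v : ℕ) : childCount ω v ≤ m := by
  rw [childCount]
  calc (Finset.univ.filter (fun k : Fin m => ((ω k).val = v))).card
      ≤ (Finset.univ : Finset (Fin m)).card := Finset.card_filter_le _ _
    _ = m := by simp

lemma rrt_transfer (m : ℕ) (ω : Omega m) (f : ℕ → ℝ) :
    ∑ i ∈ Finset.range (m + 1), f i * (numChildEq m ω i : ℝ)
    = ∑ v ∈ Finset.range (m + 1), f (childCount ω v) := by
  have hmap : ∀ v ∈ Finset.range (m + 1), childCount ω v ∈ Finset.range (m + 1) :=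
    fun v _ => Finset.mem_range.mpr (Nat.lt_succ_of_le (rrt_childCount_le m ω v))
  rw [← Finset.sum_fiberwise_of_maps_to hmap (fun v => f (childCount ω v))]
  apply Finset.sum_congr rfl
  intro i _
  have h1 : ∀ v ∈ (Finset.range (m + 1)).filter (fun v => childCount ω v = i),
      f (childCount ω v) = f i := by
    intro v hv
    rw [(Finset.mem_filter.mp hv).2]
  rw [Finset.sum_congr rfl h1, Finset.sum_const, nsmul_eq_mul, numChildEq, mul_comm]

lemma rrt_sum_childCount (m : ℕ) (ω : Omega m) :
    ∑ v ∈ Finset.range (m + 1), (childCount ω v : ℝ) = m := by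
  have h := Finset.card_eq_sum_card_fiberwise
    (f := fun k : Fin m => ((ω k) : ℕ)) (s := Finset.univ) (t := Finset.range (m + 1))
    (fun k _ => by
      simp only [Finset.mem_coe, Finset.mem_range]
      have h1 := (ω k).isLt
      have h2 := k.isLt
      omega)
  have h2 : ∑ v ∈ Finset.range (m + 1), childCount ω v = m := by
    simpa [childCount, Finset.card_univ] using h.symm
  calc ∑ v ∈ Finset.range (m + 1), (childCount ω v : ℝ)
      = ((∑ v ∈ Finset.range (m + 1), childCount ω v : ℕ) : ℝ) := by push_cast; ring
    _ = m := by rw [h2]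

lemma rrt_sum_c (m : ℕ) (f : ℕ → ℝ) :
    ∑ i ∈ Finset.range (m + 1), f i * c (m + 1) i
    = (∑ ω : Omega m, ∑ v ∈ Finset.range (m + 1), f (childCount ω v)) /
      ((Fintype.card (Omega m) : ℝ) * (m + 1)) := by
  have hc : ∀ i, c (m + 1) i
      = (∑ ω : Omega m, (numChildEq m ω i : ℝ)) / ((Fintype.card (Omega m) : ℝ) * ((m : ℝ) + 1)) := by
    intro i
    show (∑ ω : Omega m, (numChildEq m ω i : ℝ)) / (Fintype.card (Omega m) : ℝ) /
      (((m + 1 : ℕ) : ℝ)) = _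
    rw [div_div]
    push_cast
    ring
  simp only [hc]
  have hterm : ∀ i, f i * ((∑ ω : Omega m, (numChildEq m ω i : ℝ)) /
        ((Fintype.card (Omega m) : ℝ) * ((m : ℝ) + 1)))
      = (∑ ω : Omega m, f i * (numChildEq m ω i : ℝ)) /
        ((Fintype.card (Omega m) : ℝ) * ((m : ℝ) + 1)) := by
    intro i
    rw [← mul_div_assoc, Finset.mul_sum]
  simp only [hterm]
  rw [← Finset.sum_div]
  have hcast : ((Fintype.card (Omega m) : ℝ) * ((m : ℕ) + 1 : ℝ))
      = ((Fintype.card (Omega m) : ℝ) * ((m : ℝ) + 1)) := by push_cast; ring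
  rw [hcast]
  congr 1
  rw [Finset.sum_comm]
  exact Finset.sum_congr rfl fun ω _ => rrt_transfer m ω f


/-- in the random recursive tree on `n ≥ 1` nodes, the variance of
the number of children of a uniformly chosen node is
`Var_n[C] = 2 − (n−1)/n² − 2H_n/n`, where `E_n[C] = Σ_i i·c_n(i)` and
`Var_n[C] = Σ_i (i − E_n[C])²·c_n(i)`. -/
theorem variance_children (n : ℕ) (hn : 1 ≤ n) :
    ∑ i ∈ Finset.range n,
        ((i : ℝ) - ∑ i' ∈ Finset.range n, (i' : ℝ) * c n i') ^ 2 * c n i =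
      2 - ((n : ℝ) - 1) / (n : ℝ) ^ 2 - 2 * harmonicR n / n := by
  obtain ⟨m, rfl⟩ : ∃ m, n = m + 1 := ⟨n - 1, by omega⟩
  have hcard : (0 : ℝ) < (Fintype.card (Omega m) : ℝ) := by
    exact_mod_cast Fintype.card_pos
  have hN : (Fintype.card (Omega m) : ℝ) ≠ 0 := ne_of_gt hcard
  have hm1 : ((m : ℝ) + 1) ≠ 0 := by positivity
  have hμ : ∑ i' ∈ Finset.range (m + 1), (i' : ℝ) * c (m + 1) i'
      = (m : ℝ) / ((m : ℝ) + 1) := by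
    have h1 : ∑ i' ∈ Finset.range (m + 1), (i' : ℝ) * c (m + 1) i'
        = (∑ ω : Omega m, ∑ v ∈ Finset.range (m + 1), (childCount ω v : ℝ)) /
          ((Fintype.card (Omega m) : ℝ) * (m + 1)) := rrt_sum_c m (fun i => (i : ℝ))
    rw [h1, Finset.sum_congr rfl (fun ω (_ : ω ∈ Finset.univ) => rrt_sum_childCount m ω),
      Finset.sum_const, Finset.card_univ, nsmul_eq_mul]
    field_simp
  rw [hμ]
  have h2 : ∑ i ∈ Finset.range (m + 1),
        ((i : ℝ) - (m : ℝ) / ((m : ℝ) + 1)) ^ 2 * c (m + 1) i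
      = (∑ ω : Omega m, ∑ v ∈ Finset.range (m + 1),
          ((childCount ω v : ℝ) - (m : ℝ) / ((m : ℝ) + 1)) ^ 2) /
        ((Fintype.card (Omega m) : ℝ) * (m + 1)) :=
    rrt_sum_c m (fun i => ((i : ℝ) - (m : ℝ) / ((m : ℝ) + 1)) ^ 2)
  rw [h2]
  have hexp : ∀ ω : Omega m,
      ∑ v ∈ Finset.range (m + 1),
        ((childCount ω v : ℝ) - (m : ℝ) / ((m : ℝ) + 1)) ^ 2
      = (∑ v ∈ Finset.range (m + 1), (childCount ω v : ℝ) ^ 2)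
        - 2 * ((m : ℝ) / ((m : ℝ) + 1)) * (m : ℝ)
        + ((m : ℝ) + 1) * ((m : ℝ) / ((m : ℝ) + 1)) ^ 2 := by
    intro ω
    have hptw : ∀ v ∈ Finset.range (m + 1),
        ((childCount ω v : ℝ) - (m : ℝ) / ((m : ℝ) + 1)) ^ 2
        = (childCount ω v : ℝ) ^ 2
          - 2 * ((m : ℝ) / ((m : ℝ) + 1)) * (childCount ω v : ℝ)
          + ((m : ℝ) / ((m : ℝ) + 1)) ^ 2 := fun v _ => by ring
    rw [Finset.sum_congr rfl hptw, Finset.sum_add_distrib, Finset.sum_sub_distrib,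
      ← Finset.mul_sum, rrt_sum_childCount m ω, Finset.sum_const, Finset.card_range,
      nsmul_eq_mul]
    push_cast
    ring
  rw [Finset.sum_congr rfl (fun ω (_ : ω ∈ Finset.univ) => hexp ω),
    Finset.sum_add_distrib, Finset.sum_sub_distrib, Finset.sum_const, Finset.sum_const,
    Finset.card_univ, nsmul_eq_mul, nsmul_eq_mul, rrt_sum_sq m]
  have hH : harmonicR (m + 1) = harmonicR m + 1 / ((m : ℝ) + 1) := by
    rw [harmonicR, harmonicR, Finset.sum_range_succ]
  rw [hH]
  push_cast
  field_simp
  ring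
end

section
/- The joint quantities p_n(i,j) satisfy the recurrences: p_n(0,j) = ((n-2)/n)·p_{n-1}(0,j) + (1/n)·g_{n-1}(j-1), and p_n(i,j) = ((n-2)/n)·p_{n-1}(i,j) + (1/n)·p_{n-1}(i-1,j) for i ≥ 1, valid for n ≥ 3 and 0 ≤ i,j ≤ n-1, where g_{n-1}(j-1) = Σ_{i=0}^{n-2} p_{n-1}(i, j-1) and p_{n-1}(i,-1) = 0. -/
open Finset

def extendω {m : ℕ} (ω' : Omega m) (u : Fin (m+1)) : Omega (m+1) :=
  fun k => if h : k.val < m then ω' ⟨k.val, h⟩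
    else Fin.cast (by have := k.isLt; omega) u

lemma extend_lt {m : ℕ} (ω' : Omega m) (u : Fin (m+1)) (k : Fin (m+1)) (h : k.val < m) :
    extendω ω' u k = ω' ⟨k.val, h⟩ := dif_pos h

lemma extend_val_lt {m : ℕ} (ω' : Omega m) (u : Fin (m+1)) (k : Fin (m+1)) (h : k.val < m) :
    (extendω ω' u k).val = (ω' ⟨k.val, h⟩).val := by rw [extend_lt]

lemma extend_last_val {m : ℕ} (ω' : Omega m) (u : Fin (m+1)) (k : Fin (m+1)) (h : ¬ k.val < m) :
    (extendω ω' u k).val = u.val := by simp [extendω, dif_neg h]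

def splitEquiv (m : ℕ) : Omega m × Fin (m+1) ≃ Omega (m+1) where
  toFun x := extendω x.1 x.2
  invFun ω := (fun k => ω (Fin.castSucc k), ω (Fin.last m))
  left_inv := by
    rintro ⟨ω', u⟩
    refine Prod.ext ?_ ?_
    · funext k
      simp [extendω, Fin.castSucc, Fin.castAdd, Fin.castLE]
    · simp [extendω, Fin.last]
  right_inv := by
    intro ω
    funext k
    show extendω _ _ k = ω k
    by_cases h : k.val < m
    · rw [extend_lt _ _ _ h]
      congr 1
    · have hk : k = Fin.last m := Fin.ext (by have := k.isLt; simp [Fin.last]; omega)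
      subst hk
      apply Fin.ext
      rw [extend_last_val _ _ _ h]
lemma card_omega (m : ℕ) :
    Fintype.card (Omega (m+1)) = Fintype.card (Omega m) * (m+1) := by
  rw [← Fintype.card_congr (splitEquiv m), Fintype.card_prod, Fintype.card_fin]

lemma sum_omega_split {M : Type*} [AddCommMonoid M] {m : ℕ} (f : Omega (m+1) → M) :
    ∑ ω : Omega (m+1), f ω = ∑ ω' : Omega m, ∑ u : Fin (m+1), f (extendω ω' u) := by
  rw [← (splitEquiv m).sum_comp f, Fintype.sum_prod_type]
  rfl

lemma childCount_extend {m : ℕ} (ω' : Omega m) (u : Fin (m+1)) (v : ℕ) :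
    childCount (extendω ω' u) v = childCount ω' v + (if u.val = v then 1 else 0) := by
  unfold childCount
  rw [Finset.card_filter, Finset.card_filter, Fin.sum_univ_castSucc]
  congr 1
  · apply Finset.sum_congr rfl
    intro k _
    have h : (Fin.castSucc k).val < m := k.isLt
    rw [extend_val_lt _ _ _ h]
    simp
  · rw [extend_last_val _ _ _ (by simp [Fin.last])]

lemma childCount_big {m : ℕ} (ω' : Omega m) (v : ℕ) (h : m ≤ v) :
    childCount ω' v = 0 := by
  unfold childCount
  rw [Finset.card_eq_zero, Finset.filter_eq_empty_iff]
  intro k _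
  have := (ω' k).isLt
  have := k.isLt
  omega

lemma depth_extend {m : ℕ} (ω' : Omega m) (u : Fin (m+1)) :
    ∀ v, v ≤ m → depth (extendω ω' u) v = depth ω' v := by
  intro v
  induction v using Nat.strong_induction_on with
  | _ v ih =>
    match v with
    | 0 => intro _; simp [depth]
    | w+1 =>
      intro hw
      have h1 : w < m + 1 := by omega
      have h2 : w < m := by omega
      rw [depth, depth, dif_pos h1, dif_pos h2,
        show extendω ω' u ⟨w, h1⟩ = ω' ⟨w, h2⟩ from extend_lt _ _ _ h2]
      have hb : (ω' ⟨w, h2⟩).val < w + 1 := (ω' ⟨w, h2⟩).isLt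
      rw [ih _ (by omega) (by omega)]

lemma depth_extend_last {m : ℕ} (ω' : Omega m) (u : Fin (m+1)) :
    depth (extendω ω' u) (m+1) = depth ω' u.val + 1 := by
  rw [depth, dif_pos (Nat.lt_succ_self m)]
  have : (extendω ω' u ⟨m, Nat.lt_succ_self m⟩).val = u.val :=
    extend_last_val _ _ _ (by simp)
  rw [this, depth_extend _ _ _ (by have := u.isLt; omega)]
lemma joint_extend_split {m : ℕ} (ω' : Omega m) (u : Fin (m+1)) (i j : ℕ) :
    numJointEq (m+1) (extendω ω' u) i j
      = (∑ v ∈ Finset.range (m+1),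
          if (childCount ω' v + (if u.val = v then 1 else 0) = i ∧ depth ω' v = j)
          then 1 else 0)
        + (if (i = 0 ∧ depth ω' u.val + 1 = j) then 1 else 0) := by
  unfold numJointEq
  rw [Finset.card_filter, Finset.sum_range_succ]
  congr 1
  · apply Finset.sum_congr rfl
    intro v hv
    rw [Finset.mem_range] at hv
    rw [childCount_extend, depth_extend _ _ _ (by omega)]
  · have hu : u.val ≠ m + 1 := by have := u.isLt; omega
    rw [childCount_extend, childCount_big _ _ (by omega), if_neg hu, depth_extend_last]
    simp [eq_comm]

lemma sumTailRRT {m : ℕ} (ω' : Omega m) (i j : ℕ) :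
    (∑ u : Fin (m+1), if (i = 0 ∧ depth ω' u.val + 1 = j) then 1 else 0)
      = if i = 0 then (if j = 0 then 0 else numGenEq m ω' (j-1)) else 0 := by
  by_cases hi : i = 0
  · subst hi
    rcases j with _ | j'
    · simp
    · simp only [if_pos rfl, if_neg (Nat.succ_ne_zero j'), Nat.add_sub_cancel]
      unfold numGenEq
      rw [Finset.card_filter, ← Fin.sum_univ_eq_sum_range]
      apply Finset.sum_congr rfl
      intro u _
      simp [Nat.succ_inj]
  · simp [hi]

lemma sumInnerRRT {m : ℕ} (ω' : Omega m) (i j : ℕ) :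
    (∑ u : Fin (m+1), ∑ v ∈ Finset.range (m+1),
        if (childCount ω' v + (if u.val = v then 1 else 0) = i ∧ depth ω' v = j)
        then (1:ℕ) else 0)
      = m * numJointEq m ω' i j
        + (if i = 0 then 0 else numJointEq m ω' (i-1) j) := by
  rw [Finset.sum_comm]
  have step : ∀ v ∈ Finset.range (m+1),
      (∑ u : Fin (m+1),
        if (childCount ω' v + (if u.val = v then 1 else 0) = i ∧ depth ω' v = j)
        then (1:ℕ) else 0)
      = (if (childCount ω' v + 1 = i ∧ depth ω' v = j) then 1 else 0)
        + m * (if (childCount ω' v = i ∧ depth ω' v = j) then 1 else 0) := by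
    intro v hv
    rw [Finset.mem_range] at hv
    have hvf : (⟨v, hv⟩ : Fin (m+1)) ∈ (Finset.univ : Finset (Fin (m+1))) :=
      Finset.mem_univ _
    rw [← Finset.add_sum_erase _ _ hvf]
    congr 1
    · simp
    · have hconst : ∀ u ∈ Finset.univ.erase (⟨v, hv⟩ : Fin (m+1)),
          (if (childCount ω' v + if u.val = v then 1 else 0) = i ∧ depth ω' v = j
            then (1:ℕ) else 0)
          = (if (childCount ω' v = i ∧ depth ω' v = j) then 1 else 0) := by
        intro u hu
        rw [Finset.mem_erase] at hu
        have : u.val ≠ v := fun h => hu.1 (Fin.ext h)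
        simp [this]
      rw [Finset.sum_congr rfl hconst, Finset.sum_const,
        Finset.card_erase_of_mem hvf, Finset.card_univ, Fintype.card_fin,
        Nat.add_sub_cancel, smul_eq_mul]
  rw [Finset.sum_congr rfl step, Finset.sum_add_distrib, ← Finset.mul_sum]
  have h2 : (∑ v ∈ Finset.range (m+1),
      if (childCount ω' v = i ∧ depth ω' v = j) then (1:ℕ) else 0)
      = numJointEq m ω' i j := (Finset.card_filter _ _).symm
  have h1 : (∑ v ∈ Finset.range (m+1),
      if (childCount ω' v + 1 = i ∧ depth ω' v = j) then (1:ℕ) else 0)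
      = if i = 0 then 0 else numJointEq m ω' (i-1) j := by
    rcases i with _ | i'
    · simp
    · rw [if_neg (Nat.succ_ne_zero i')]
      unfold numJointEq
      rw [Finset.card_filter]
      apply Finset.sum_congr rfl
      intro v _
      simp [Nat.succ_inj]
  rw [h1, h2]
  omega

lemma key_sum {m : ℕ} (ω' : Omega m) (i j : ℕ) :
    ∑ u : Fin (m+1), numJointEq (m+1) (extendω ω' u) i j
      = m * numJointEq m ω' i j
        + (if i = 0 then (if j = 0 then 0 else numGenEq m ω' (j-1))
           else numJointEq m ω' (i-1) j) := by
  calc ∑ u : Fin (m+1), numJointEq (m+1) (extendω ω' u) i j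
      = (∑ u : Fin (m+1), ∑ v ∈ Finset.range (m+1),
          if (childCount ω' v + (if u.val = v then 1 else 0) = i ∧ depth ω' v = j)
          then 1 else 0)
        + ∑ u : Fin (m+1), (if (i = 0 ∧ depth ω' u.val + 1 = j) then 1 else 0) := by
        rw [← Finset.sum_add_distrib]
        exact Finset.sum_congr rfl fun u _ => joint_extend_split ω' u i j
    _ = _ := by
        rw [sumInnerRRT, sumTailRRT]
        by_cases hi : i = 0 <;> simp [hi]
lemma childCount_le {m : ℕ} (ω : Omega m) (v : ℕ) : childCount ω v ≤ m := by
  unfold childCount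
  calc _ ≤ (Finset.univ : Finset (Fin m)).card := Finset.card_filter_le _ _
    _ = m := by simp

lemma sum_joint_eq_gen {m : ℕ} (ω : Omega m) (j : ℕ) :
    ∑ i' ∈ Finset.range (m+1), numJointEq m ω i' j = numGenEq m ω j := by
  unfold numJointEq numGenEq
  rw [Finset.card_filter, Finset.sum_congr rfl
    (fun i' _ => Finset.card_filter (fun v => childCount ω v = i' ∧ depth ω v = j) _),
    Finset.sum_comm]
  apply Finset.sum_congr rfl
  intro v _
  by_cases hd : depth ω v = j
  · simp only [hd, and_true, if_pos rfl]
    rw [Finset.sum_ite_eq]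
    simp [Nat.lt_succ_of_le (childCount_le ω v)]
  · simp [hd]

lemma totR0 (m : ℕ) :
    (∑ ω : Omega (m+1), (numJointEq (m+1) ω 0 0 : ℝ))
      = m * ∑ ω' : Omega m, (numJointEq m ω' 0 0 : ℝ) := by
  rw [sum_omega_split, Finset.mul_sum]
  apply Finset.sum_congr rfl
  intro ω' _
  rw [← Nat.cast_sum, key_sum]
  simp

lemma totR1 (m j' : ℕ) :
    (∑ ω : Omega (m+1), (numJointEq (m+1) ω 0 (j'+1) : ℝ))
      = m * (∑ ω' : Omega m, (numJointEq m ω' 0 (j'+1) : ℝ))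
        + ∑ ω' : Omega m, (numGenEq m ω' j' : ℝ) := by
  rw [sum_omega_split, Finset.mul_sum, ← Finset.sum_add_distrib]
  apply Finset.sum_congr rfl
  intro ω' _
  rw [← Nat.cast_sum, key_sum]
  push_cast
  simp

lemma totR2 (m i' j : ℕ) :
    (∑ ω : Omega (m+1), (numJointEq (m+1) ω (i'+1) j : ℝ))
      = m * (∑ ω' : Omega m, (numJointEq m ω' (i'+1) j : ℝ))
        + ∑ ω' : Omega m, (numJointEq m ω' i' j : ℝ) := by
  rw [sum_omega_split, Finset.mul_sum, ← Finset.sum_add_distrib]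
  apply Finset.sum_congr rfl
  intro ω' _
  rw [← Nat.cast_sum, key_sum]
  push_cast
  simp
lemma p_eq (m i j : ℕ) :
    p (m+1) i j = (∑ ω : Omega m, (numJointEq m ω i j : ℝ))
        / ((Fintype.card (Omega m) : ℝ) * (m+1)) := by
  unfold p treeExpect
  rw [Nat.add_sub_cancel, div_div]
  push_cast
  rfl

lemma sum_p (m j' : ℕ) :
    ∑ i' ∈ Finset.range (m+1), p (m+1) i' j'
      = (∑ ω : Omega m, (numGenEq m ω j' : ℝ))
        / ((Fintype.card (Omega m) : ℝ) * (m+1)) := by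
  rw [Finset.sum_congr rfl (fun i' _ => p_eq m i' j'), ← Finset.sum_div]
  congr 1
  rw [Finset.sum_comm]
  apply Finset.sum_congr rfl
  intro ω _
  rw [← Nat.cast_sum, sum_joint_eq_gen]

/-- the joint quantities `p_n(i,j)` satisfy
`p_n(0,j) = ((n-2)/n)·p_{n-1}(0,j) + (1/n)·g_{n-1}(j-1)` and, for `i ≥ 1`,
`p_n(i,j) = ((n-2)/n)·p_{n-1}(i,j) + (1/n)·p_{n-1}(i-1,j)`, valid for `n ≥ 3`
and `0 ≤ i, j ≤ n-1`, where `g_{n-1}(j-1) = Σ_{i=0}^{n-2} p_{n-1}(i, j-1)` and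
`p_{n-1}(i,-1) = 0` (so the `g`-term vanishes when `j = 0`). -/
theorem joint_recurrence (n i j : ℕ) (hn : 3 ≤ n) (hi : i ≤ n - 1) (hj : j ≤ n - 1) :
    (p n 0 0 = (((n : ℝ) - 2) / n) * p (n - 1) 0 0) ∧
    (1 ≤ j → p n 0 j = (((n : ℝ) - 2) / n) * p (n - 1) 0 j +
        (1 / n) * ∑ i' ∈ Finset.range (n - 1), p (n - 1) i' (j - 1)) ∧
    (1 ≤ i → p n i j = (((n : ℝ) - 2) / n) * p (n - 1) i j +
        (1 / n) * p (n - 1) (i - 1) j) := by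
  obtain ⟨m, rfl⟩ : ∃ m, n = m + 2 := ⟨n - 2, by omega⟩
  have e1 : m + 2 - 1 = m + 1 := rfl
  have e2 : m + 2 = (m + 1) + 1 := rfl
  have hK : (Fintype.card (Omega m) : ℝ) ≠ 0 := by
    exact_mod_cast Fintype.card_ne_zero
  have h1 : (m : ℝ) + 1 ≠ 0 := by positivity
  have h2 : (m : ℝ) + 1 + 1 ≠ 0 := by positivity
  have hcard : (Fintype.card (Omega (m+1)) : ℝ)
      = (Fintype.card (Omega m) : ℝ) * ((m : ℝ) + 1) := by
    rw [card_omega]; push_cast; ring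
  refine ⟨?_, ?_, ?_⟩
  · rw [e1, e2, p_eq (m+1) 0 0, p_eq m 0 0, totR0, hcard]
    push_cast
    field_simp
    ring
  · intro hj1
    obtain ⟨j', rfl⟩ : ∃ j', j = j' + 1 := ⟨j - 1, by omega⟩
    have e3 : j' + 1 - 1 = j' := rfl
    rw [e1, e3, e2, sum_p m j', p_eq (m+1) 0 (j'+1), p_eq m 0 (j'+1), totR1, hcard]
    push_cast
    field_simp
    ring
  · intro hi1
    obtain ⟨i', rfl⟩ : ∃ i', i = i' + 1 := ⟨i - 1, by omega⟩
    have e4 : i' + 1 - 1 = i' := rfl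
    rw [e1, e4, e2, p_eq (m+1) (i'+1) j, p_eq m (i'+1) j, p_eq m i' j, totR2, hcard]
    push_cast
    field_simp
    ring
end
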